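/- If f : [a,b] ⊆ (0,∞) → ℝ is symmetrized p-convex and integrable on [a,b] (p ≠ 0), then f((((a^p + b^p)/2))^(1/p)) ≤ (p/(b^p - a^p)) ∫_a^b f(x)·x^(p-1) dx ≤ (f(a) + f(b))/2. -/

import Mathlib

noncomputable section
open Real Set MeasureTheory intervalIntegral

/-- `f` is p-convex on `[a,b]`. -/
def PConvexOn (p a b : ℝ) (f : ℝ → ℝ) : Prop :=
  ∀ x ∈ Set.Icc a b, ∀ y ∈ Set.Icc a b, ∀ t ∈ Set.Icc (0:ℝ) 1,
    f ((t * x ^ p + (1 - t) * y ^ p) ^ (1/p)) ≤ t * f x + (1 - t) * f y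

/-- The p-symmetrical transform of `f` on `[a,b]`. -/
def PSym (p a b : ℝ) (f : ℝ → ℝ) : ℝ → ℝ :=
  fun x => (f x + f ((a ^ p + b ^ p - x ^ p) ^ (1/p))) / 2

variable {p a b : ℝ}


private lemma hh_min_max (hp : p ≠ 0) (ha : 0 < a) (hab : a < b) :
    (∀ x ∈ Icc a b, min (a^p) (b^p) ≤ x^p ∧ x^p ≤ max (a^p) (b^p)) ∧
      (∀ c : ℝ, min (a^p) (b^p) ≤ c → c ≤ max (a^p) (b^p) → c ^ (1/p) ∈ Icc a b) := by
  have hb : 0 < b := ha.trans hab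
  rcases hp.lt_or_gt with h | h
  · have hBA : b ^ p ≤ a ^ p := Real.rpow_le_rpow_of_nonpos ha hab.le h.le
    have hmin : min (a^p) (b^p) = b ^ p := min_eq_right hBA
    have hmax : max (a^p) (b^p) = a ^ p := max_eq_left hBA
    have h1p : (1/p) ≠ 0 := by
      simpa using hp
    constructor
    · intro x hx
      have hx0 : 0 < x := ha.trans_le hx.1
      refine ⟨?_, ?_⟩
      · rw [hmin]; exact Real.rpow_le_rpow_of_nonpos hx0 hx.2 h.le
      · rw [hmax]; exact Real.rpow_le_rpow_of_nonpos ha hx.1 h.le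
    · intro c hc1 hc2
      rw [hmin] at hc1; rw [hmax] at hc2
      have hc0 : 0 < c := lt_of_lt_of_le (Real.rpow_pos_of_pos hb p) hc1
      have h1pn : 1/p ≤ 0 := le_of_lt (by rw [one_div]; exact inv_neg''.mpr h)
      constructor
      · have := Real.rpow_le_rpow_of_nonpos hc0 hc2 h1pn
        rw [one_div] at this; rw [Real.rpow_rpow_inv ha.le hp] at this; rwa [one_div]
      · have := Real.rpow_le_rpow_of_nonpos (Real.rpow_pos_of_pos hb p) hc1 h1pn
        rw [one_div] at this; rw [Real.rpow_rpow_inv hb.le hp] at this; rwa [one_div]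
  · have hAB : a ^ p ≤ b ^ p := Real.rpow_le_rpow ha.le hab.le h.le
    have hmin : min (a^p) (b^p) = a ^ p := min_eq_left hAB
    have hmax : max (a^p) (b^p) = b ^ p := max_eq_right hAB
    constructor
    · intro x hx
      have hx0 : 0 < x := ha.trans_le hx.1
      refine ⟨?_, ?_⟩
      · rw [hmin]; exact Real.rpow_le_rpow ha.le hx.1 h.le
      · rw [hmax]; exact Real.rpow_le_rpow hx0.le hx.2 h.le
    · intro c hc1 hc2
      rw [hmin] at hc1; rw [hmax] at hc2
      have hc0 : 0 < c := lt_of_lt_of_le (Real.rpow_pos_of_pos ha p) hc1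
      have h1pn : 0 ≤ 1/p := by positivity
      constructor
      · have := Real.rpow_le_rpow (Real.rpow_pos_of_pos ha p).le hc1 h1pn
        rw [one_div] at this; rw [Real.rpow_rpow_inv ha.le hp] at this; rwa [one_div]
      · have := Real.rpow_le_rpow hc0.le hc2 h1pn
        rw [one_div] at this; rw [Real.rpow_rpow_inv hb.le hp] at this; rwa [one_div]

private lemma hh_sub (hp : p ≠ 0) (ha : 0 < a) (hab : a < b) {x : ℝ} (hx : x ∈ Icc a b) :
    min (a^p) (b^p) ≤ a^p + b^p - x^p ∧ a^p + b^p - x^p ≤ max (a^p) (b^p) := by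
  obtain ⟨h1, h2⟩ := (hh_min_max hp ha hab).1 x hx
  have h3 : min (a^p) (b^p) + max (a^p) (b^p) = a^p + b^p := min_add_max _ _
  constructor <;> linarith

private lemma hh_sub_pos (hp : p ≠ 0) (ha : 0 < a) (hab : a < b) {x : ℝ} (hx : x ∈ Icc a b) :
    0 < a^p + b^p - x^p :=
  lt_of_lt_of_le (lt_min (Real.rpow_pos_of_pos ha p)
    (Real.rpow_pos_of_pos (ha.trans hab) p)) (hh_sub hp ha hab hx).1

private lemma hh_sigma_mem (hp : p ≠ 0) (ha : 0 < a) (hab : a < b) {x : ℝ} (hx : x ∈ Icc a b) :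
    (a^p + b^p - x^p) ^ (1/p) ∈ Icc a b :=
  (hh_min_max hp ha hab).2 _ (hh_sub hp ha hab hx).1 (hh_sub hp ha hab hx).2

private lemma hh_sigma_pow (hp : p ≠ 0) (ha : 0 < a) (hab : a < b) {x : ℝ} (hx : x ∈ Icc a b) :
    ((a^p + b^p - x^p) ^ (1/p)) ^ p = a^p + b^p - x^p := by
  rw [one_div, Real.rpow_inv_rpow (hh_sub_pos hp ha hab hx).le hp]

private lemma hh_sigma_invol (hp : p ≠ 0) (ha : 0 < a) (hab : a < b) {x : ℝ} (hx : x ∈ Icc a b) :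
    (a^p + b^p - ((a^p + b^p - x^p) ^ (1/p)) ^ p) ^ (1/p) = x := by
  rw [hh_sigma_pow hp ha hab hx]
  have hx0 : (0:ℝ) ≤ x := (ha.trans_le hx.1).le
  have : a ^ p + b ^ p - (a ^ p + b ^ p - x ^ p) = x ^ p := by ring
  rw [this, one_div, Real.rpow_rpow_inv hx0 hp]

theorem hermite_hadamard_symmetrized_pconvex (p a b : ℝ) (hp : p ≠ 0)
    (ha : 0 < a) (hab : a < b) (f : ℝ → ℝ)
    (hf : PConvexOn p a b (PSym p a b f))
    (hint : IntervalIntegrable (fun x => f x * x ^ (p - 1)) volume a b) :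
    f (((a ^ p + b ^ p) / 2) ^ (1/p)) ≤
        (p / (b ^ p - a ^ p)) * ∫ x in a..b, f x * x ^ (p - 1) ∧
    (p / (b ^ p - a ^ p)) * ∫ x in a..b, f x * x ^ (p - 1) ≤ (f a + f b) / 2 := by
  have hb : 0 < b := ha.trans hab
  set σ : ℝ → ℝ := fun x => (a ^ p + b ^ p - x ^ p) ^ (1/p) with hσ
  set g : ℝ → ℝ := PSym p a b f with hg
  set m : ℝ := ((a ^ p + b ^ p) / 2) ^ (1/p) with hm
  have hgdef : ∀ x, g x = (f x + f (σ x)) / 2 := fun x => rfl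
  have hinvol : ∀ x ∈ Icc a b, σ (σ x) = x := fun x hx => hh_sigma_invol hp ha hab hx
  have hgσ : ∀ x ∈ Icc a b, g (σ x) = g x := by
    intro x hx
    rw [hgdef, hgdef, show σ (σ x) = x from hinvol x hx]
    ring
  have hABpos : (0:ℝ) < (a ^ p + b ^ p) / 2 := by
    have := Real.rpow_pos_of_pos ha p
    have := Real.rpow_pos_of_pos hb p
    linarith
  have hm_pow : m ^ p = (a ^ p + b ^ p) / 2 := by
    rw [hm, one_div, Real.rpow_inv_rpow hABpos.le hp]
  have h3 : min (a^p) (b^p) + max (a^p) (b^p) = a^p + b^p := min_add_max _ _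
  have hminmax : min (a^p) (b^p) ≤ max (a^p) (b^p) := min_le_max
  have hmm : m ∈ Icc a b := (hh_min_max hp ha hab).2 _ (by linarith) (by linarith)
  have hgm : g m = f m := by
    rw [hgdef]
    have : σ m = m := by
      show (a ^ p + b ^ p - m ^ p) ^ (1/p) = m
      rw [hm_pow, show a ^ p + b ^ p - (a ^ p + b ^ p)/2 = (a ^ p + b ^ p)/2 by ring, ← hm]
    rw [this]; ring
  -- pointwise lower bound
  have hlow : ∀ x ∈ Icc a b, f m ≤ g x := by
    intro x hx
    have hσx := hh_sigma_mem hp ha hab hx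
    have hcvx := hf x hx (σ x) hσx (1/2) (by norm_num)
    have harg : (1/2 * x ^ p + (1 - 1/2) * (σ x) ^ p) = (a ^ p + b ^ p)/2 := by
      rw [show (σ x) ^ p = a^p + b^p - x^p from hh_sigma_pow hp ha hab hx]; ring
    rw [harg, ← hm] at hcvx
    rw [hgm, hgσ x hx] at hcvx
    linarith
  -- endpoint values
  have hσa : σ a = b := by
    show (a ^ p + b ^ p - a ^ p) ^ (1/p) = b
    rw [show a ^ p + b ^ p - a ^ p = b ^ p by ring, one_div, Real.rpow_rpow_inv hb.le hp]
  have hσb : σ b = a := by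
    show (a ^ p + b ^ p - b ^ p) ^ (1/p) = a
    rw [show a ^ p + b ^ p - b ^ p = a ^ p by ring, one_div, Real.rpow_rpow_inv ha.le hp]
  have hga : g a = (f a + f b) / 2 := by rw [hgdef, hσa]
  have hgb : g b = (f a + f b) / 2 := by rw [hgdef, hσb]; ring
  -- pointwise upper bound
  have hBA : b ^ p - a ^ p ≠ 0 := by
    rcases hp.lt_or_gt with h | h
    · have := Real.rpow_lt_rpow_of_neg ha hab h
      intro hc; linarith
    · have := Real.rpow_lt_rpow ha.le hab h
      intro hc; linarith
  have hup : ∀ x ∈ Icc a b, g x ≤ (f a + f b) / 2 := by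
    intro x hx
    have hx0 : 0 < x := ha.trans_le hx.1
    set t : ℝ := (b ^ p - x ^ p) / (b ^ p - a ^ p) with ht
    have hxb := (hh_min_max hp ha hab).1 x hx
    have ht01 : t ∈ Icc (0:ℝ) 1 := by
      rcases hp.lt_or_gt with h | h
      · have h1 : b ^ p < a ^ p := Real.rpow_lt_rpow_of_neg ha hab h
        have hmin : min (a^p) (b^p) = b ^ p := min_eq_right h1.le
        have hmax : max (a^p) (b^p) = a ^ p := max_eq_left h1.le
        rw [hmin] at hxb; rw [hmax] at hxb
        constructor
        · exact div_nonneg_of_nonpos (by linarith [hxb.1]) (by linarith)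
        · rw [ht, div_le_one_iff]
          right; right; exact ⟨by linarith, by linarith [hxb.2]⟩
      · have h1 : a ^ p < b ^ p := Real.rpow_lt_rpow ha.le hab h
        have hmin : min (a^p) (b^p) = a ^ p := min_eq_left h1.le
        have hmax : max (a^p) (b^p) = b ^ p := max_eq_right h1.le
        rw [hmin] at hxb; rw [hmax] at hxb
        constructor
        · exact div_nonneg (by linarith [hxb.2]) (by linarith)
        · rw [ht, div_le_one (by linarith)]; linarith [hxb.1]
    have h1 : t * (b ^ p - a ^ p) = b ^ p - x ^ p := div_mul_cancel₀ _ hBA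
    have hxp : t * a ^ p + (1 - t) * b ^ p = x ^ p := by linear_combination -h1
    have hcvx := hf a ⟨le_refl a, hab.le⟩ b ⟨hab.le, le_refl b⟩ t ht01
    rw [hxp, one_div, Real.rpow_rpow_inv hx0.le hp] at hcvx
    rw [hga, hgb] at hcvx
    have : t * ((f a + f b)/2) + (1 - t) * ((f a + f b)/2) = (f a + f b)/2 := by ring
    linarith
  -- derivative of σ
  have hD : ∀ x ∈ Icc a b, HasDerivWithinAt σ
      (-((a^p + b^p - x^p) ^ (1/p - 1) * x ^ (p-1))) (Icc a b) x := by
    intro x hx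
    have hx0 : 0 < x := ha.trans_le hx.1
    have hu : 0 < a ^ p + b ^ p - x ^ p := hh_sub_pos hp ha hab hx
    have hinner : HasDerivAt (fun y : ℝ => a ^ p + b ^ p - y ^ p) (-(p * x ^ (p-1))) x :=
      (Real.hasDerivAt_rpow_const (Or.inl hx0.ne')).const_sub (a ^ p + b ^ p)
    have houter : HasDerivAt (fun u : ℝ => u ^ (1/p))
        ((1/p) * (a ^ p + b ^ p - x ^ p) ^ (1/p - 1)) (a ^ p + b ^ p - x ^ p) :=
      Real.hasDerivAt_rpow_const (Or.inl hu.ne')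
    have hcomp := houter.comp x hinner
    have : (1/p) * (a ^ p + b ^ p - x ^ p) ^ (1/p - 1) * -(p * x ^ (p-1))
        = -((a^p + b^p - x^p) ^ (1/p - 1) * x ^ (p-1)) := by
      field_simp
    rw [this] at hcomp
    exact hcomp.hasDerivWithinAt
  have hinj : InjOn σ (Icc a b) := fun x hx y hy h => by
    rw [← hinvol x hx, ← hinvol y hy, h]
  have himg : σ '' (Icc a b) = Icc a b := by
    apply Subset.antisymm
    · rintro _ ⟨x, hx, rfl⟩; exact hh_sigma_mem hp ha hab hx
    · intro y hy; exact ⟨σ y, hh_sigma_mem hp ha hab hy, hinvol y hy⟩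
  have habs : ∀ x ∈ Icc a b, |(-((a^p + b^p - x^p) ^ (1/p - 1) * x ^ (p-1)))| •
      (f (σ x) * (σ x) ^ (p-1)) = f (σ x) * x ^ (p-1) := by
    intro x hx
    have hx0 : 0 < x := ha.trans_le hx.1
    have hu : 0 < a ^ p + b ^ p - x ^ p := hh_sub_pos hp ha hab hx
    have h1 : (σ x) ^ (p-1) = (a ^ p + b ^ p - x ^ p) ^ ((1/p) * (p-1)) := by
      rw [Real.rpow_mul hu.le]
    have h2 : (a^p + b^p - x^p) ^ ((1:ℝ)/p - 1) * (a^p + b^p - x^p) ^ ((1/p) * (p-1)) = 1 := by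
      rw [← Real.rpow_add hu]
      rw [show (1:ℝ)/p - 1 + (1/p) * (p-1) = 0 by field_simp; ring, Real.rpow_zero]
    rw [abs_neg, abs_of_pos (by positivity), smul_eq_mul, h1]
    linear_combination (f (σ x) * x ^ (p-1)) * h2
  have hmeas : MeasurableSet (Icc a b) := measurableSet_Icc
  have hintIcc : IntegrableOn (fun x => f x * x ^ (p-1)) (Icc a b) volume := by
    rw [integrableOn_Icc_iff_integrableOn_Ioc]; exact hint.1
  have hkey := integral_image_eq_integral_abs_deriv_smul hmeas hD hinj
    (fun u => f u * u ^ (p-1))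
  rw [himg] at hkey
  have hkey2 : ∫ x in Icc a b, f x * x ^ (p-1) = ∫ x in Icc a b, f (σ x) * x ^ (p-1) := by
    rw [hkey]; exact setIntegral_congr_fun hmeas habs
  have hint2 : IntegrableOn (fun x => f (σ x) * x ^ (p-1)) (Icc a b) volume := by
    have := (integrableOn_image_iff_integrableOn_abs_deriv_smul hmeas hD hinj
      (fun u => f u * u ^ (p-1))).mp (by rw [himg]; exact hintIcc)
    exact this.congr_fun habs hmeas
  -- integral of g equals integral of f
  have hgw_eq : ∀ x, g x * x ^ (p-1) = (f x * x ^ (p-1) + f (σ x) * x ^ (p-1)) / 2 := by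
    intro x; rw [hgdef]; ring
  have hgint : IntegrableOn (fun x => g x * x ^ (p-1)) (Icc a b) volume := by
    have h := (hintIcc.add hint2).div_const 2
    exact IntegrableOn.congr_fun h (fun x _ => (hgw_eq x).symm) hmeas
  have hgIeq : ∫ x in Icc a b, g x * x ^ (p-1) = ∫ x in Icc a b, f x * x ^ (p-1) := by
    calc ∫ x in Icc a b, g x * x ^ (p-1)
        = ∫ x in Icc a b, (f x * x ^ (p-1) + f (σ x) * x ^ (p-1)) / 2 := by
          simp only [hgw_eq]
      _ = ((∫ x in Icc a b, f x * x ^ (p-1)) + ∫ x in Icc a b, f (σ x) * x ^ (p-1)) / 2 := by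
          rw [MeasureTheory.integral_div, MeasureTheory.integral_add hintIcc hint2]
      _ = ∫ x in Icc a b, f x * x ^ (p-1) := by rw [← hkey2]; ring
  -- interval integral versions
  have huIcc : uIcc a b = Icc a b := uIcc_of_le hab.le
  have hgint' : IntervalIntegrable (fun x => g x * x ^ (p-1)) volume a b := by
    apply IntegrableOn.intervalIntegrable; rwa [huIcc]
  have hwint : IntervalIntegrable (fun x : ℝ => x ^ (p-1)) volume a b := by
    apply ContinuousOn.intervalIntegrable
    apply ContinuousOn.rpow_const continuousOn_id
    intro x hx; left; rw [huIcc] at hx; exact (ha.trans_le hx.1).ne'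
  have hIw : ∫ x in a..b, x ^ (p-1) = (b ^ p - a ^ p) / p := by
    rw [integral_rpow (Or.inr ⟨by intro h; apply hp; linarith,
      notMem_uIcc_of_lt ha hb⟩)]
    norm_num
  have hK : 0 < (b ^ p - a ^ p) / p := by
    rcases hp.lt_or_gt with h | h
    · have := Real.rpow_lt_rpow_of_neg ha hab h
      exact div_pos_of_neg_of_neg (by linarith) h
    · have := Real.rpow_lt_rpow ha.le hab h
      exact div_pos (by linarith) h
  have hgI : ∫ x in a..b, g x * x ^ (p-1) = ∫ x in a..b, f x * x ^ (p-1) := by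
    rw [intervalIntegral.integral_of_le hab.le, intervalIntegral.integral_of_le hab.le,
      ← integral_Icc_eq_integral_Ioc, ← integral_Icc_eq_integral_Ioc, hgIeq]
  have hwnn : ∀ x ∈ Icc a b, (0:ℝ) ≤ x ^ (p-1) := fun x hx =>
    Real.rpow_nonneg (ha.trans_le hx.1).le _
  constructor
  · -- lower bound
    have hmono : ∫ x in a..b, f m * x ^ (p-1) ≤ ∫ x in a..b, g x * x ^ (p-1) :=
      intervalIntegral.integral_mono_on hab.le (hwint.const_mul (f m)) hgint'
        (fun x hx => mul_le_mul_of_nonneg_right (hlow x hx) (hwnn x hx))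
    rw [intervalIntegral.integral_const_mul, hIw, hgI] at hmono
    rw [← inv_div, inv_mul_eq_div, le_div_iff₀ hK]
    exact hmono
  · have hmono : ∫ x in a..b, g x * x ^ (p-1) ≤ ∫ x in a..b, ((f a + f b)/2) * x ^ (p-1) :=
      intervalIntegral.integral_mono_on hab.le hgint' (hwint.const_mul _)
        (fun x hx => mul_le_mul_of_nonneg_right (hup x hx) (hwnn x hx))
    rw [intervalIntegral.integral_const_mul, hIw, hgI] at hmono
    rw [← inv_div, inv_mul_eq_div, div_le_iff₀ hK]
    exact hmono
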